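/- arXiv:2003.12572 — 2 statements merged into one kernel-verified Lean document; each statement's English description precedes it below -/
import Mathlib

section
/- For every integer n ≥ 0, the central Delannoy number D(n) = D(n,n) satisfies D(n) = 1 + (-1)^{n+1} · ∑_{r=0}^{n-1} (-1)^r · C(n+1, r+1) · D(n,r). -/
open Finset

/-- The Delannoy numbers: `D(p,q) = ∑_{i=0}^{p} C(p,i) C(q,i) 2^i`. -/
def delannoy (p q : ℕ) : ℕ :=
  ∑ i ∈ Finset.range (p + 1), p.choose i * q.choose i * 2 ^ i

/-- `∑_{r=0}^{m} (-1)^r C(m,r) C(r,i) = (-1)^i δ_{i,m}`. -/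
lemma lemB (m i : ℕ) :
    ∑ r ∈ range (m + 1), (-1 : ℤ) ^ r * (m.choose r : ℤ) * (r.choose i : ℤ)
      = if i = m then (-1 : ℤ) ^ i else 0 := by
  by_cases him : i ≤ m
  · have hsplit : range (m + 1) = range i ∪ Ico i (m + 1) := by
      rw [range_eq_Ico, range_eq_Ico, Finset.Ico_union_Ico_eq_Ico (Nat.zero_le i) (by omega)]
    rw [hsplit, Finset.sum_union (by
      simp [Finset.disjoint_left, Finset.mem_Ico]; omega)]
    have h1 : ∑ r ∈ range i, (-1 : ℤ) ^ r * (m.choose r : ℤ) * (r.choose i : ℤ) = 0 := by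
      apply Finset.sum_eq_zero
      intro r hr
      rw [Finset.mem_range] at hr
      rw [Nat.choose_eq_zero_of_lt hr]
      simp
    rw [h1, zero_add, Finset.sum_Ico_eq_sum_range]
    have h2 : ∀ t ∈ range (m + 1 - i),
        (-1 : ℤ) ^ (i + t) * (m.choose (i + t) : ℤ) * ((i + t).choose i : ℤ)
          = (-1 : ℤ) ^ i * (m.choose i : ℤ) * ((-1 : ℤ) ^ t * ((m - i).choose t : ℤ)) := by
      intro t ht
      rw [Finset.mem_range] at ht
      have hle : i + t ≤ m := by omega
      have h := Nat.choose_mul (n := m) (k := i + t) (s := i) (Nat.le_add_right i t)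
      rw [Nat.add_sub_cancel_left] at h
      have key : (m.choose (i + t) : ℤ) * ((i + t).choose i : ℤ)
          = (m.choose i : ℤ) * (((m - i).choose t : ℤ)) := by exact_mod_cast congrArg Nat.cast h
      rw [pow_add]
      linear_combination ((-1 : ℤ) ^ i * (-1 : ℤ) ^ t) * key
    rw [Finset.sum_congr rfl h2, ← Finset.mul_sum]
    have h3 : ∑ t ∈ range (m + 1 - i), (-1 : ℤ) ^ t * ((m - i).choose t : ℤ)
        = if m - i = 0 then 1 else 0 := by
      have := Int.alternating_sum_range_choose (n := m - i)
      rw [show m + 1 - i = (m - i) + 1 by omega]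
      simpa using this
    rw [h3]
    by_cases heq : i = m
    · simp [heq]
    · rw [if_neg (by omega), if_neg heq, mul_zero]
  · rw [if_neg (by omega)]
    apply Finset.sum_eq_zero
    intro r hr
    rw [Finset.mem_range] at hr
    rw [Nat.choose_eq_zero_of_lt (show r < i by omega)]
    simp

/-- `∑_{r=0}^{n} (-1)^r C(n+1,r+1) C(r,i) = (-1)^i` for `i ≤ n`, else `0`. -/
lemma lemA (n : ℕ) : ∀ i : ℕ,
    ∑ r ∈ range (n + 1), (-1 : ℤ) ^ r * ((n + 1).choose (r + 1) : ℤ) * (r.choose i : ℤ)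
      = if i ≤ n then (-1 : ℤ) ^ i else 0 := by
  induction n with
  | zero =>
    intro i
    cases i with
    | zero => simp
    | succ j => simp [Nat.choose_eq_zero_of_lt (show 0 < j + 1 by omega)]
  | succ n ih =>
    intro i
    have pascal : ∀ r ∈ range (n + 2),
        (-1 : ℤ) ^ r * ((n + 2).choose (r + 1) : ℤ) * (r.choose i : ℤ)
          = (-1 : ℤ) ^ r * ((n + 1).choose r : ℤ) * (r.choose i : ℤ)
            + (-1 : ℤ) ^ r * ((n + 1).choose (r + 1) : ℤ) * (r.choose i : ℤ) := by
      intro r _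
      rw [Nat.choose_succ_succ (n + 1) r]
      push_cast
      ring
    rw [show n + 1 + 1 = n + 2 by rfl, Finset.sum_congr rfl pascal, Finset.sum_add_distrib]
    have hB := lemB (n + 1) i
    rw [Finset.sum_range_succ
      (fun r => (-1 : ℤ) ^ r * ((n + 1).choose (r + 1) : ℤ) * (r.choose i : ℤ))]
    simp only [Nat.choose_self, Nat.choose_succ_self, Nat.cast_zero]
    rw [hB, ih i]
    by_cases h1 : i = n + 1
    · rw [if_pos h1, if_neg (by omega), if_pos (by omega)]
      simp
    · by_cases h2 : i ≤ n
      · rw [if_neg h1, if_pos h2, if_pos (by omega)]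
        simp
      · rw [if_neg h1, if_neg h2, if_neg (by omega)]
        simp

/-- A recursive relation for central Delannoy numbers:
`D(n) = D(n,n) = 1 + (-1)^{n+1} · ∑_{r=0}^{n-1} (-1)^r · C(n+1, r+1) · D(n,r)`. -/
theorem centralDelannoy_recursion (n : ℕ) :
    (delannoy n n : ℤ) =
      1 + (-1 : ℤ) ^ (n + 1) *
        ∑ r ∈ Finset.range n,
          (-1 : ℤ) ^ r * ((n + 1).choose (r + 1) : ℤ) * (delannoy n r : ℤ) := by
  have hT : ∑ r ∈ range (n + 1),
      (-1 : ℤ) ^ r * ((n + 1).choose (r + 1) : ℤ) * (delannoy n r : ℤ) = (-1 : ℤ) ^ n := by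
    have expand : ∀ r ∈ range (n + 1), (-1 : ℤ) ^ r * ((n + 1).choose (r + 1) : ℤ) * (delannoy n r : ℤ)
        = ∑ i ∈ range (n + 1),
            (-1 : ℤ) ^ r * ((n + 1).choose (r + 1) : ℤ)
              * ((n.choose i : ℤ) * (r.choose i : ℤ) * 2 ^ i) := by
      intro r _
      rw [← Finset.mul_sum]
      congr 1
      simp only [delannoy]
      push_cast
      ring
    rw [Finset.sum_congr rfl expand, Finset.sum_comm]
    have inner : ∀ i ∈ range (n + 1),
        ∑ r ∈ range (n + 1),
            (-1 : ℤ) ^ r * ((n + 1).choose (r + 1) : ℤ)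
              * ((n.choose i : ℤ) * (r.choose i : ℤ) * 2 ^ i)
          = (-2 : ℤ) ^ i * 1 ^ (n - i) * (n.choose i : ℤ) := by
      intro i hi
      rw [Finset.mem_range] at hi
      have : ∑ r ∈ range (n + 1),
          (-1 : ℤ) ^ r * ((n + 1).choose (r + 1) : ℤ)
            * ((n.choose i : ℤ) * (r.choose i : ℤ) * 2 ^ i)
          = ((n.choose i : ℤ) * 2 ^ i) *
            ∑ r ∈ range (n + 1), (-1 : ℤ) ^ r * ((n + 1).choose (r + 1) : ℤ) * (r.choose i : ℤ) := by
        rw [Finset.mul_sum]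
        exact Finset.sum_congr rfl fun r _ => by ring
      rw [this, lemA n i, if_pos (by omega)]
      rw [neg_pow 2 i]
      ring
    rw [Finset.sum_congr rfl inner, ← add_pow (-2 : ℤ) 1 n]
    norm_num
  rw [Finset.sum_range_succ] at hT
  simp only [Nat.choose_self, Nat.cast_one] at hT
  have hsq : (-1 : ℤ) ^ n * (-1 : ℤ) ^ n = 1 := by
    rw [← pow_add]
    exact Even.neg_one_pow ⟨n, rfl⟩
  rw [pow_succ]
  linear_combination ((-1 : ℤ) ^ n) * hT + (1 - (delannoy n n : ℤ)) * hsq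
end

section
/- For all integers p, q ≥ 0, let W(p,q) denote the (q+1)×(q+1) matrix whose first column has entries W_{i,1} = ⟨p⟩_{i-1} for 1 ≤ i ≤ q+1, and whose remaining entries are W_{i,j} = (-1)^{i-j} · C(i-1, j-1) · ⟨p+1⟩_{i-j} for 1 ≤ i ≤ q+1 and 2 ≤ j ≤ q+1 (entries with i-j < 0 being 0). Then det W(p,q) = (-1)^{p-q} · (q!/p!) · det W(q,p). -/
open Finset

/-- Delannoy numbers. -/
def del : ℕ → ℕ → ℕ
  | _, 0 => 1
  | 0, _+1 => 1
  | p+1, q+1 => del p (q+1) + del (p+1) q + del p q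

@[simp] lemma del_zero_right (p : ℕ) : del p 0 = 1 := by cases p <;> simp [del]

@[simp] lemma del_zero_left (q : ℕ) : del 0 q = 1 := by cases q <;> simp [del]

lemma del_rec (p q : ℕ) : del (p+1) (q+1) = del p (q+1) + del (p+1) q + del p q := by
  simp [del]

lemma del_symm (p q : ℕ) : del p q = del q p := by
  induction p generalizing q with
  | zero => simp
  | succ p ih =>
    induction q with
    | zero => simp
    | succ q ih2 => rw [del_rec, del_rec, ih (q+1), ih2, ih q]; ring

/-- the key identity: `(1-X)^(p+1) * Σ del p q X^q = (1+X)^p` coefficientwise. -/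
lemma key (p : ℕ) : ∀ n : ℕ,
    ∑ k ∈ range (n+1), (-1:ℚ)^k * ((p+1).choose k) * (del p (n-k)) = p.choose n := by
  induction p with
  | zero =>
    intro n
    match n with
    | 0 => simp
    | n+1 =>
      rw [Finset.sum_range_succ', Finset.sum_range_succ']
      simp [Nat.choose_eq_zero_of_lt (by omega : 1 < _ + 2)]
  | succ p ih =>
    have hA : ∀ m : ℕ,
        (∑ k ∈ range (m+2), (-1:ℚ)^k * ((p+1).choose k) * (del (p+1) (m+1-k)))
        = ((p.choose (m+1) : ℚ) + (p.choose m : ℚ))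
          + ∑ k ∈ range (m+1), (-1:ℚ)^k * ((p+1).choose k) * (del (p+1) (m-k)) := by
      intro m
      rw [← ih (m+1), ← ih m]
      rw [Finset.sum_range_succ
        (f := fun k => (-1:ℚ)^k * ((p+1).choose k) * (del (p+1) (m+1-k))) (n := m+1)]
      rw [Finset.sum_range_succ
        (f := fun k => (-1:ℚ)^k * ((p+1).choose k) * (del p (m+1-k))) (n := m+1)]
      have h1 : ∀ k ∈ range (m+1),
          (-1:ℚ)^k * ((p+1).choose k) * (del (p+1) (m+1-k)) =
          (-1:ℚ)^k * ((p+1).choose k) * (del p (m+1-k))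
          + (-1:ℚ)^k * ((p+1).choose k) * (del (p+1) (m-k))
          + (-1:ℚ)^k * ((p+1).choose k) * (del p (m-k)) := by
        intro k hk
        rw [mem_range] at hk
        have hmk : m + 1 - k = (m - k) + 1 := by omega
        rw [hmk, del_rec]
        push_cast
        ring
      rw [Finset.sum_congr rfl h1, Finset.sum_add_distrib, Finset.sum_add_distrib]
      simp only [Nat.sub_self, del_zero_right, Nat.cast_one]
      ring
    intro n
    match n with
    | 0 => simp
    | n+1 =>
      have hsplit : ∑ k ∈ range (n+2), (-1:ℚ)^k * ((p+2).choose k) * (del (p+1) (n+1-k))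
          = (∑ k ∈ range (n+2), (-1:ℚ)^k * ((p+1).choose k) * (del (p+1) (n+1-k)))
            - ∑ k ∈ range (n+1), (-1:ℚ)^k * ((p+1).choose k) * (del (p+1) (n-k)) := by
        rw [Finset.sum_range_succ' (n := n+1)]
        have h1 : ∀ k ∈ range (n+1),
            (-1:ℚ)^(k+1) * ((p+2).choose (k+1)) * (del (p+1) (n+1-(k+1))) =
            (-1:ℚ)^(k+1) * ((p+1).choose (k+1)) * (del (p+1) (n+1-(k+1)))
            - (-1:ℚ)^k * ((p+1).choose k) * (del (p+1) (n-k)) := by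
          intro k hk
          rw [mem_range] at hk
          have h2 : n + 1 - (k+1) = n - k := by omega
          rw [h2, Nat.choose_succ_succ (p+1) k]
          push_cast
          ring
        rw [Finset.sum_congr rfl h1, Finset.sum_sub_distrib]
        rw [Finset.sum_range_succ'
          (f := fun k => (-1:ℚ)^k * ((p+1).choose k) * (del (p+1) (n+1-k))) (n+1)]
        simp only [Nat.choose_zero_right, Nat.cast_one, pow_zero]
        ring
      rw [hsplit, hA n, Nat.choose_succ_succ p n]
      push_cast
      ring

/-- The `(q+1) × (q+1)` matrix `W(p,q)` (indexed from 0): the first column has entries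
`⟨p⟩_i`, and for columns `j ≥ 1` the entry in row `i` is
`(-1)^{i+1-j} · C(i, j-1) · ⟨p+1⟩_{i+1-j}`, with entries above the superdiagonal
(i.e. with `j > i + 1`) being `0` since the binomial coefficient vanishes there. -/
def delannoyMatrix (p q : ℕ) : Matrix (Fin (q + 1)) (Fin (q + 1)) ℚ :=
  Matrix.of fun i j =>
    if (j : ℕ) = 0 then (p.descFactorial (i : ℕ) : ℚ)
    else (-1 : ℚ) ^ ((i : ℕ) + 1 - (j : ℕ)) * (Nat.choose (i : ℕ) ((j : ℕ) - 1)) *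
      ((p + 1).descFactorial ((i : ℕ) + 1 - (j : ℕ)) : ℚ)

/-- the unitriangular matrix `B`. -/
def Bmat (p n : ℕ) : Matrix (Fin n) (Fin n) ℚ :=
  Matrix.of fun i k =>
    (-1:ℚ)^((i:ℕ)-(k:ℕ)) * ((i:ℕ).choose (k:ℕ)) * ((p+1).descFactorial ((i:ℕ)-(k:ℕ)) : ℚ)

/-- `E`: first column is `m! · del p m`, column `j ≥ 1` is the basis vector `e_{j-1}`. -/
def Emat (p q : ℕ) : Matrix (Fin (q+1)) (Fin (q+1)) ℚ :=
  Matrix.of fun m j =>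
    if (j:ℕ) = 0 then ((m:ℕ).factorial : ℚ) * del p (m:ℕ)
    else if (m:ℕ) = (j:ℕ) - 1 then 1 else 0

lemma detB (p n : ℕ) : (Bmat p n).det = 1 := by
  rw [Matrix.det_of_lowerTriangular (Bmat p n)
    (by intro i j h; simp only [OrderDual.toDual_lt_toDual] at h
        simp [Bmat, Nat.choose_eq_zero_of_lt h])]
  apply Finset.prod_eq_one
  intro i _
  simp [Bmat]

lemma detE (p q : ℕ) : (Emat p q).det = (-1:ℚ)^q * ((q.factorial : ℚ) * del p q) := by
  set F : Matrix (Fin (q+1)) (Fin (q+1)) ℚ := Matrix.of fun i j =>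
    if (j:ℕ) = q then ((i:ℕ).factorial : ℚ) * del p (i:ℕ)
    else if (i:ℕ) = (j:ℕ) then 1 else 0 with hF
  have hsub : F = (Emat p q).submatrix id (finRotate (q+1)) := by
    ext i j
    simp only [Matrix.submatrix_apply, id_eq, finRotate_succ_apply]
    rcases eq_or_ne j (Fin.last q) with rfl | hj
    · simp [hF, Emat, Fin.last_add_one]
    · have h1 : (j:ℕ) < q := by
        have := j.isLt
        have : (j:ℕ) ≠ q := fun h => hj (Fin.ext h)
        omega
      have h2 : ((j+1 : Fin (q+1)) : ℕ) = (j:ℕ) + 1 := by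
        rw [Fin.val_add_one]
        simp [hj]
      simp [hF, Emat, h2, Nat.ne_of_lt h1, show j + 1 ≠ 0 from fun h => by simp [h] at h2]
  have hdetF : F.det = ((q.factorial : ℚ) * del p q) := by
    rw [Matrix.det_of_upperTriangular
      (by intro i j h; simp only [id_eq] at h
          have : (j:ℕ) ≠ q := by have := i.isLt; omega
          simp [hF, this, Nat.ne_of_gt (show (j:ℕ) < (i:ℕ) from h)])]
    rw [Finset.prod_eq_single (Fin.last q)]
    · simp [hF, Fin.last]
    · intro i _ hi
      have : (i:ℕ) ≠ q := fun h => hi (Fin.ext h)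
      simp [hF, this]
    · simp
  have := Matrix.det_permute' (finRotate (q+1)) (Emat p q)
  rw [← hsub, hdetF] at this
  rw [sign_finRotate, Nat.add_sub_cancel] at this
  have h3 : ((((-1:ℤˣ))^q : ℤˣ) : ℚ) = (-1:ℚ)^q := by
    push_cast
    norm_num
  rw [h3] at this
  have h4 : (-1:ℚ)^q * (-1:ℚ)^q = 1 := by
    rw [← pow_add]
    exact Even.neg_one_pow ⟨q, rfl⟩
  calc (Emat p q).det = ((-1:ℚ)^q * (-1:ℚ)^q) * (Emat p q).det := by rw [h4, one_mul]
    _ = (-1:ℚ)^q * ((-1:ℚ)^q * (Emat p q).det) := by ring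
    _ = _ := by rw [← this]

lemma W_factor (p q : ℕ) : delannoyMatrix p q = Bmat p (q+1) * Emat p q := by
  ext i j
  rw [Matrix.mul_apply]
  by_cases hj : (j:ℕ) = 0
  · -- first column
    have hE : ∀ m : Fin (q+1), Emat p q m j = ((m:ℕ).factorial : ℚ) * del p (m:ℕ) := by
      intro m; simp [Emat, hj, (by simpa using hj : j = 0)]
    simp only [hE]
    set g : ℕ → ℚ := fun m =>
      (-1:ℚ)^((i:ℕ)-m) * ((i:ℕ).choose m) * ((p+1).descFactorial ((i:ℕ)-m) : ℚ)
      * ((m.factorial : ℚ) * del p m) with hg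
    have hstep : ∑ m : Fin (q+1), Bmat p (q+1) i m * (((m:ℕ).factorial : ℚ) * del p (m:ℕ))
        = ∑ m ∈ range (q+1), g m := by
      rw [← Fin.sum_univ_eq_sum_range g (q+1)]
      rfl
    rw [hstep]
    have hsub2 : ∑ m ∈ range (q+1), g m = ∑ m ∈ range ((i:ℕ)+1), g m := by
      refine (Finset.sum_subset ?_ ?_).symm
      · intro x hx
        rw [mem_range] at hx ⊢
        have := i.isLt
        omega
      · intro x _ hx
        rw [mem_range] at hx
        have : (i:ℕ) < x := by omega
        simp [hg, Nat.choose_eq_zero_of_lt this]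
    rw [hsub2, ← Finset.sum_range_reflect g ((i:ℕ)+1)]
    have hterm : ∀ k ∈ range ((i:ℕ)+1),
        g ((i:ℕ) + 1 - 1 - k) = ((i:ℕ).factorial : ℚ) *
          ((-1:ℚ)^k * (((p+1).choose k : ℕ) : ℚ) * (del p ((i:ℕ)-k))) := by
      intro k hk
      rw [mem_range] at hk
      have e1 : (i:ℕ) + 1 - 1 - k = (i:ℕ) - k := by omega
      have e2 : (i:ℕ) - ((i:ℕ) - k) = k := by omega
      rw [e1, hg]
      simp only [e2]
      have e3n : (i:ℕ).choose ((i:ℕ)-k) * ((p+1).descFactorial k)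
          * (((i:ℕ)-k).factorial) = (i:ℕ).factorial * ((p+1).choose k) := by
        rw [Nat.descFactorial_eq_factorial_mul_choose]
        have e4 : (i:ℕ).choose ((i:ℕ)-k) = (i:ℕ).choose k := Nat.choose_symm (by omega)
        rw [e4]
        have e5 := Nat.choose_mul_factorial_mul_factorial (show k ≤ (i:ℕ) by omega)
        calc (i:ℕ).choose k * (k.factorial * (p+1).choose k) * ((i:ℕ)-k).factorial
            = ((i:ℕ).choose k * k.factorial * ((i:ℕ)-k).factorial) * (p+1).choose k := by ring
          _ = (i:ℕ).factorial * (p+1).choose k := by rw [e5]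
      have e3 : ((i:ℕ).choose ((i:ℕ)-k) : ℚ) * ((p+1).descFactorial k : ℚ)
          * (((i:ℕ)-k).factorial : ℚ) = ((i:ℕ).factorial : ℚ) * ((p+1).choose k : ℚ) := by
        exact_mod_cast congrArg (Nat.cast : ℕ → ℚ) e3n
      calc (-1:ℚ)^k * ((i:ℕ).choose ((i:ℕ)-k)) * ((p+1).descFactorial k : ℚ)
            * ((((i:ℕ)-k).factorial : ℚ) * del p ((i:ℕ)-k))
          = (((i:ℕ).choose ((i:ℕ)-k) : ℚ) * ((p+1).descFactorial k : ℚ)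
              * (((i:ℕ)-k).factorial : ℚ)) * ((-1:ℚ)^k * del p ((i:ℕ)-k)) := by ring
        _ = _ := by rw [e3]; ring
    rw [Finset.sum_congr rfl hterm, ← Finset.mul_sum]
    have := key p (i:ℕ)
    rw [this]
    simp [delannoyMatrix, hj, Nat.descFactorial_eq_factorial_mul_choose, (by simpa using hj : j = 0)]
  · -- columns j ≥ 1
    have hj1 : 1 ≤ (j:ℕ) := Nat.one_le_iff_ne_zero.mpr hj
    set m₀ : Fin (q+1) := ⟨(j:ℕ)-1, by have := j.isLt; omega⟩ with hm₀
    rw [Finset.sum_eq_single m₀]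
    · have hEm : Emat p q m₀ j = 1 := by
        simp [Emat, hj, hm₀, (by simpa using hj : j ≠ 0)]
      rw [hEm, mul_one]
      have e1 : (i:ℕ) - ((j:ℕ) - 1) = (i:ℕ) + 1 - (j:ℕ) := by omega
      simp only [delannoyMatrix, Bmat, Matrix.of_apply, hj, if_false, hm₀, e1]
    · intro m _ hm
      have : (m:ℕ) ≠ (j:ℕ) - 1 := by
        intro h
        exact hm (Fin.ext (by simp [hm₀, h]))
      simp [Emat, hj, this, (by simpa using hj : j ≠ 0)]
    · intro h
      exact absurd (Finset.mem_univ m₀) h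

lemma detW (p q : ℕ) :
    (delannoyMatrix p q).det = (-1:ℚ)^q * ((q.factorial : ℚ) * del p q) := by
  rw [W_factor, Matrix.det_mul, detB, detE, one_mul]

/-- The symmetry relation `det W(p,q) = (-1)^{p-q} · (q!/p!) · det W(q,p)`. -/
theorem delannoyMatrix_det_symm (p q : ℕ) :
    (delannoyMatrix p q).det =
      (-1 : ℚ) ^ ((p : ℤ) - (q : ℤ)) * ((q.factorial : ℚ) / (p.factorial : ℚ)) *
        (delannoyMatrix q p).det := by
  rw [detW p q, detW q p, del_symm p q]
  have hz : (-1:ℚ) ^ ((p : ℤ) - (q : ℤ)) = (-1:ℚ)^p * ((-1:ℚ)^q)⁻¹ := by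
    rw [zpow_sub₀ (by norm_num : (-1:ℚ) ≠ 0), zpow_natCast, zpow_natCast, div_eq_mul_inv]
  have hinv : ((-1:ℚ)^q)⁻¹ = (-1:ℚ)^q := by
    rw [← inv_pow, inv_neg, inv_one]
  have hp : (p.factorial : ℚ) ≠ 0 := Nat.cast_ne_zero.mpr p.factorial_ne_zero
  rw [hz, hinv]
  have h4 : (-1:ℚ)^p * (-1:ℚ)^p = 1 := by
    rw [← pow_add]; exact Even.neg_one_pow ⟨p, rfl⟩
  have hpi : (p.factorial : ℚ) * (p.factorial : ℚ)⁻¹ = 1 := mul_inv_cancel₀ hp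
  linear_combination (-((-1:ℚ)^q * (q.factorial : ℚ) * del q p * ((-1:ℚ)^p * (-1:ℚ)^p))) * hpi
    + (-((-1:ℚ)^q * (q.factorial : ℚ) * del q p)) * h4
end
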